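/- arXiv:1511.00885 — 5 statements merged into one kernel-verified Lean document; each statement's English description precedes it below -/
import Mathlib

section
/- For every ε > 0, the family of matrices B(k) = [[1,1],[e^{2πiτk},0]] with 0 ≤ k < ε is irreducible over ℂ: the only subspaces of ℂ² invariant under all B(k) with 0 ≤ k < ε are {0} and ℂ². -/
open Complex

/-- For every `ε > 0`, the family of Fibonacci Fourier matrices
`B(k) = [[1,1],[e^{2πiτk},0]]`, `0 ≤ k < ε`, is irreducible over `ℂ`:
the only subspaces of `ℂ²` invariant under all `B(k)` with `0 ≤ k < ε`
are `{0}` and `ℂ²`. Here `τ = (1+√5)/2`. -/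
theorem fibonacci_fourier_matrix_family_irreducible :
    ∀ ε : ℝ, 0 < ε →
      ∀ p : Submodule ℂ (Fin 2 → ℂ),
        (∀ k : ℝ, 0 ≤ k → k < ε → ∀ v ∈ p,
          Matrix.mulVec
            (!![1, 1;
                Complex.exp (2 * Real.pi * Complex.I *
                  (((1 + Real.sqrt 5) / 2 : ℝ) : ℂ) * (k : ℂ)), 0]) v ∈ p) →
        p = ⊥ ∨ p = ⊤ := by
  intro ε hε p hp
  by_cases hbot : p = ⊥
  · exact Or.inl hbot
  right
  obtain ⟨v, hv, hvne⟩ := Submodule.exists_mem_ne_zero_of_ne_bot hbot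
  set τ : ℝ := (1 + Real.sqrt 5) / 2 with hτ
  have hs5 : Real.sqrt 5 < 3 := by
    nlinarith [Real.sq_sqrt (by norm_num : (0:ℝ) ≤ 5), Real.sqrt_nonneg 5]
  have hτ1 : 1 < τ := by
    rw [hτ]; nlinarith [Real.sqrt_nonneg 5, Real.sq_sqrt (by norm_num : (0:ℝ) ≤ 5)]
  have hτ2 : τ < 2 := by rw [hτ]; linarith
  set k2 : ℝ := min ε 1 / 2 with hk2
  have hk2pos : 0 < k2 := by
    have := lt_min hε one_pos
    rw [hk2]; linarith
  have hk2lt : k2 < ε := by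
    have h1 : min ε 1 ≤ ε := min_le_left _ _
    rw [hk2]; linarith
  have hk2le : k2 ≤ 1 / 2 := by
    have h1 : min ε 1 ≤ 1 := min_le_right _ _
    rw [hk2]; linarith
  set e : ℂ := Complex.exp (2 * Real.pi * Complex.I * (τ : ℂ) * (k2 : ℂ)) with he
  have hene : e ≠ 1 := by
    intro h1
    obtain ⟨n, hn⟩ := Complex.exp_eq_one_iff.mp (he ▸ h1)
    have h2pi : (2 * (Real.pi : ℂ) * Complex.I) ≠ 0 := by
      simp [Real.pi_ne_zero, Complex.I_ne_zero]
    have hfac : (((τ : ℂ) * (k2 : ℂ)) - (n : ℂ)) * (2 * (Real.pi : ℂ) * Complex.I) = 0 := by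
      linear_combination hn
    rcases mul_eq_zero.mp hfac with h | h
    · have hcast : ((τ * k2 : ℝ) : ℂ) = ((n : ℝ) : ℂ) := by
        push_cast
        linear_combination h
      have hr : τ * k2 = (n : ℝ) := Complex.ofReal_inj.mp hcast
      have h0 : 0 < τ * k2 := by positivity
      have h1 : τ * k2 < 1 := by nlinarith
      have hn0 : (0 : ℤ) < n := by exact_mod_cast hr ▸ h0
      have hn1 : (n : ℤ) < 1 := by exact_mod_cast hr ▸ h1
      omega
    · exact h2pi h
  -- membership at k = 0
  have h0mem := hp 0 le_rfl hε v hv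
  have h0eq : Matrix.mulVec
      (!![1, 1; Complex.exp (2 * Real.pi * Complex.I * ((τ : ℝ) : ℂ) * ((0:ℝ) : ℂ)), 0]) v
      = ![v 0 + v 1, v 0] := by
    funext i
    fin_cases i <;>
      simp [Matrix.mulVec, dotProduct, Fin.sum_univ_two]
  rw [h0eq] at h0mem
  -- membership at k = k2
  have hkmem := hp k2 hk2pos.le hk2lt v hv
  have hkeq : Matrix.mulVec
      (!![1, 1; Complex.exp (2 * Real.pi * Complex.I * ((τ : ℝ) : ℂ) * ((k2:ℝ) : ℂ)), 0]) v
      = ![v 0 + v 1, e * v 0] := by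
    funext i
    fin_cases i <;>
      simp [Matrix.mulVec, dotProduct, Fin.sum_univ_two, he]
  rw [hkeq] at hkmem
  -- e1 = ![0,1] ∈ p
  have he1 : (![0, 1] : Fin 2 → ℂ) ∈ p := by
    by_cases hv0 : v 0 = 0
    · have hv1 : v 1 ≠ 0 := by
        intro hv1
        apply hvne
        funext i; fin_cases i <;> simp [hv0, hv1]
      have : (![0, 1] : Fin 2 → ℂ) = (v 1)⁻¹ • v := by
        funext i; fin_cases i <;> simp [hv0, hv1]
      rw [this]
      exact p.smul_mem _ hv
    · have hd : (![v 0 + v 1, v 0] - ![v 0 + v 1, e * v 0] : Fin 2 → ℂ) ∈ p :=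
        p.sub_mem h0mem hkmem
      have hc : (1 - e) * v 0 ≠ 0 :=
        mul_ne_zero (sub_ne_zero.mpr (Ne.symm hene)) hv0
      have : (![0, 1] : Fin 2 → ℂ)
          = ((1 - e) * v 0)⁻¹ • (![v 0 + v 1, v 0] - ![v 0 + v 1, e * v 0]) := by
        funext i
        fin_cases i
        · simp
        · simp only [Pi.smul_apply, Pi.sub_apply, Fin.mk_one, Matrix.cons_val_one, Matrix.head_cons, Matrix.cons_val_zero]
          rw [smul_eq_mul, show v 0 - e * v 0 = (1 - e) * v 0 by ring, inv_mul_cancel₀ hc]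
      rw [this]
      exact p.smul_mem _ hd
  -- e0 = ![1,0] ∈ p
  have he0 : (![1, 0] : Fin 2 → ℂ) ∈ p := by
    have hmem := hp 0 le_rfl hε _ he1
    have heq : Matrix.mulVec
        (!![1, 1; Complex.exp (2 * Real.pi * Complex.I * ((τ : ℝ) : ℂ) * ((0:ℝ) : ℂ)), 0])
        (![0, 1] : Fin 2 → ℂ) = ![1, 0] := by
      funext i
      fin_cases i <;>
        simp [Matrix.mulVec, dotProduct, Fin.sum_univ_two]
    rwa [heq] at hmem
  -- conclude p = ⊤
  rw [eq_top_iff]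
  intro x _
  have hx : x = x 0 • (![1, 0] : Fin 2 → ℂ) + x 1 • (![0, 1] : Fin 2 → ℂ) := by
    funext i; fin_cases i <;> simp
  rw [hx]
  exact p.add_mem (p.smul_mem _ he0) (p.smul_mem _ he1)
end

section
/- Suppose functions I_aa, I_ab, I_ba, I_bb : ℝ → ℂ satisfy, for all k in a set F closed under multiplication by τ, the relations I_aa(k) = τ⁻²(I_aa(τk)+I_ab(τk)+I_ba(τk)+I_bb(τk)), I_ab(k) = τ⁻² e^{−2πiτk}(I_aa(τk)+I_ba(τk)), I_ba(k) = τ⁻² e^{2πiτk}(I_aa(τk)+I_ab(τk)), I_bb(k) = τ⁻² I_aa(τk). Then the determinant of the Hermitian matrix 𝓘(k) = [[I_aa(k), I_ab(k)],[I_ba(k), I_bb(k)]] satisfies det(𝓘(τk)) = τ⁴ det(𝓘(k)) for all k ∈ F. Consequently, if det(𝓘(·)) is bounded on the orbit {τⁿ k : n ∈ ℕ} for each k ∈ F, then det(𝓘(k)) = 0 for all k ∈ F. -/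
open Complex

/-- Renormalisation relations for the Fibonacci intensity matrix: if the
functions `I_αβ` satisfy the stated relations on a set `F` closed under
multiplication by `τ = (1+√5)/2`, then `det 𝓘(τk) = τ⁴ det 𝓘(k)` on `F`;
consequently, if `det 𝓘` is bounded on each orbit `{τⁿ k : n ∈ ℕ}`, then
`det 𝓘(k) = 0` for all `k ∈ F`. -/
theorem fibonacci_intensity_det_scaling
    (Iaa Iab Iba Ibb : ℝ → ℂ) (F : Set ℝ)
    (hF : ∀ k ∈ F, ((1 + Real.sqrt 5) / 2) * k ∈ F)
    (τdef : ℝ) (hτ : τdef = (1 + Real.sqrt 5) / 2)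
    (𝓘 : ℝ → Matrix (Fin 2) (Fin 2) ℂ)
    (h𝓘 : ∀ k, 𝓘 k = !![Iaa k, Iab k; Iba k, Ibb k])
    (haa : ∀ k ∈ F, Iaa k = (τdef : ℂ)⁻¹ ^ 2 *
      (Iaa (τdef * k) + Iab (τdef * k) + Iba (τdef * k) + Ibb (τdef * k)))
    (hab : ∀ k ∈ F, Iab k = (τdef : ℂ)⁻¹ ^ 2 *
      Complex.exp (-(2 * Real.pi * Complex.I * τdef * k)) *
      (Iaa (τdef * k) + Iba (τdef * k)))
    (hba : ∀ k ∈ F, Iba k = (τdef : ℂ)⁻¹ ^ 2 *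
      Complex.exp (2 * Real.pi * Complex.I * τdef * k) *
      (Iaa (τdef * k) + Iab (τdef * k)))
    (hbb : ∀ k ∈ F, Ibb k = (τdef : ℂ)⁻¹ ^ 2 * Iaa (τdef * k)) :
    (∀ k ∈ F, (𝓘 (τdef * k)).det = (τdef : ℂ) ^ 4 * (𝓘 k).det) ∧
    ((∀ k ∈ F, ∃ C : ℝ, ∀ n : ℕ, ‖(𝓘 (τdef ^ n * k)).det‖ ≤ C) →
      ∀ k ∈ F, (𝓘 k).det = 0) := by
  have h5 : (1 : ℝ) < Real.sqrt 5 := by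
    rw [show (1:ℝ) = Real.sqrt 1 by simp]
    exact Real.sqrt_lt_sqrt (by norm_num) (by norm_num)
  have hτ1 : (1 : ℝ) < τdef := by rw [hτ]; linarith
  have hτ0 : (τdef : ℂ) ≠ 0 := by
    exact_mod_cast ne_of_gt (lt_trans one_pos hτ1)
  have key : ∀ k ∈ F, (𝓘 (τdef * k)).det = (τdef : ℂ) ^ 4 * (𝓘 k).det := by
    intro k hk
    have hexp : Complex.exp (-(2 * Real.pi * Complex.I * τdef * k)) *
        Complex.exp (2 * Real.pi * Complex.I * τdef * k) = 1 := by
      rw [← Complex.exp_add]; ring_nf; exact Complex.exp_zero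
    rw [h𝓘, h𝓘, Matrix.det_fin_two_of, Matrix.det_fin_two_of,
      haa k hk, hab k hk, hba k hk, hbb k hk]
    have hinv : (τdef : ℂ)⁻¹ * τdef = 1 := inv_mul_cancel₀ hτ0
    have hτ4 : (τdef:ℂ)^4 * ((τdef:ℂ)⁻¹^2)^2 = 1 := by
      linear_combination (((τdef:ℂ)⁻¹*τdef)^3 + ((τdef:ℂ)⁻¹*τdef)^2 + (τdef:ℂ)⁻¹*τdef + 1) * hinv
    linear_combination (-(Iaa (τdef*k) * Ibb (τdef*k) - Iab (τdef*k) * Iba (τdef*k))) * hτ4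
      + ((τdef:ℂ)^4 * ((τdef:ℂ)⁻¹^2)^2 * (Iaa (τdef*k) + Iba (τdef*k))
        * (Iaa (τdef*k) + Iab (τdef*k))) * hexp
  refine ⟨key, ?_⟩
  intro hbdd k hk
  obtain ⟨C, hC⟩ := hbdd k hk
  by_contra hne
  have habs : 0 < ‖(𝓘 k).det‖ := by
    exact norm_pos_iff.mpr hne
  -- orbit membership and scaling
  have horbit : ∀ n : ℕ, τdef ^ n * k ∈ F ∧
      (𝓘 (τdef ^ n * k)).det = (τdef : ℂ) ^ (4 * n) * (𝓘 k).det := by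
    intro n
    induction n with
    | zero => simpa using hk
    | succ n ih =>
      obtain ⟨hmem, heq⟩ := ih
      have hmem' : τdef ^ (n + 1) * k ∈ F := by
        have := hF _ hmem
        rw [← hτ] at this
        convert this using 1
        ring
      refine ⟨hmem', ?_⟩
      have := key _ hmem
      rw [heq] at this
      calc (𝓘 (τdef ^ (n + 1) * k)).det = (𝓘 (τdef * (τdef ^ n * k))).det := by
            ring_nf
        _ = (τdef : ℂ) ^ 4 * ((τdef : ℂ) ^ (4 * n) * (𝓘 k).det) := this
        _ = (τdef : ℂ) ^ (4 * (n + 1)) * (𝓘 k).det := by ring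
  -- unboundedness
  have h4 : (1:ℝ) < τdef ^ 4 := one_lt_pow₀ hτ1 (by norm_num)
  obtain ⟨n, hn⟩ := pow_unbounded_of_one_lt (C / ‖(𝓘 k).det‖) h4
  have h1 := hC n
  rw [(horbit n).2] at h1
  have h2 : ‖(τdef : ℂ) ^ (4 * n) * (𝓘 k).det‖
      = (τdef ^ 4) ^ n * ‖(𝓘 k).det‖ := by
    rw [norm_mul, norm_pow, Complex.norm_real, Real.norm_eq_abs, abs_of_pos (lt_trans one_pos hτ1),
      ← pow_mul, mul_comm 4 n]
  rw [h2] at h1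
  have : (τdef ^ 4) ^ n ≤ C / ‖(𝓘 k).det‖ := by
    rw [le_div_iff₀ habs]; exact h1
  linarith
end

section
/- Let η₊ : ℤ → ℝ satisfy η₊(2n) = η₊(n) and η₊(2n+1) = (1/2)(η₊(n) + η₊(n+1)) for all n ∈ ℤ. Then η₊ is constant: η₊(n) = η₊(0) for all n ∈ ℤ. -/
/-- Thue–Morse renormalisation, even sector: any `η₊ : ℤ → ℝ` with
`η₊(2n) = η₊(n)` and `η₊(2n+1) = (η₊(n) + η₊(n+1))/2` is constant. -/
theorem thue_morse_even_solution_constant (η : ℤ → ℝ)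
    (h1 : ∀ n : ℤ, η (2 * n) = η n)
    (h2 : ∀ n : ℤ, η (2 * n + 1) = (1 / 2) * (η n + η (n + 1))) :
    ∀ n : ℤ, η n = η 0 := by
  -- difference recursion
  have key : ∀ m : ℤ, η (m + 1) - η m = (1 / 2) * (η (m / 2 + 1) - η (m / 2)) := by
    intro m
    rcases Int.even_or_odd m with ⟨n, hn⟩ | ⟨n, hn⟩
    · have hm : m = 2 * n := by omega
      have hd : m / 2 = n := by omega
      rw [hd, hm]
      have := h2 n
      have := h1 n
      linarith
    · have hm : m = 2 * n + 1 := by omega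
      have hd : m / 2 = n := by omega
      rw [hd, hm]
      have e1 := h2 n
      have e2 := h1 (n + 1)
      have : (2 : ℤ) * n + 1 + 1 = 2 * (n + 1) := by ring
      rw [this, e2]
      linarith
  have d0 : η (0 + 1) - η 0 = 0 := by
    have := h2 0
    norm_num at this ⊢
    linarith
  have dm1 : η (-1 + 1) - η (-1) = 0 := by
    have := h2 (-1)
    norm_num at this ⊢
    linarith
  have dzero : ∀ m : ℤ, η (m + 1) - η m = 0 := by
    have aux : ∀ k : ℕ, ∀ m : ℤ, m.natAbs ≤ k → η (m + 1) - η m = 0 := by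
      intro k
      induction k with
      | zero => intro m hm; have : m = 0 := by omega
                rw [this]; exact d0
      | succ k ih =>
        intro m hm
        rcases eq_or_ne m 0 with rfl | h0
        · exact d0
        rcases eq_or_ne m (-1) with rfl | h1'
        · exact dm1
        have hlt : (m / 2).natAbs ≤ k := by omega
        have := ih (m / 2) hlt
        rw [key m, this]
        ring
    intro m; exact aux m.natAbs m le_rfl
  have step : ∀ m : ℤ, η (m + 1) = η m := fun m => by linarith [dzero m]
  intro n
  induction n using Int.induction_on with
  | zero => rfl
  | succ i ih => rw [step i, ih]
  | pred i ih => rw [show (-(i:ℤ) - 1) = (-(i:ℤ) - 1) from rfl, ← ih, ← step (-(i:ℤ) - 1)]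
                 norm_num
end

section
/- Let ν : ℤ[τ] → ℝ (τ = (1+√5)/2 golden ratio, ℤ[τ] the ring of integers of ℚ(√5)) be given for each pair of indices (α,β) ∈ {a,b}² as functions ν_{αβ} satisfying: (i) ν_{αβ}(z) = 0 whenever z ∉ S, where S is a fixed subset of ℤ[τ] with S ∩ [−τ², τ²] ⊆ {0, ±1, ±τ, ±(τ+1), ±1/τ}; (ii) the symmetry ν_{αβ}(−z) = ν_{βα}(z); (iii) the renormalisation relations ν_aa(z) = τ⁻¹(ν_aa(z/τ)+ν_ab(z/τ)+ν_ba(z/τ)+ν_bb(z/τ)), ν_ab(z) = τ⁻¹(ν_aa(z/τ − 1)+ν_ba(z/τ − 1)), ν_ba(z) = τ⁻¹(ν_aa(z/τ + 1)+ν_ab(z/τ + 1)), ν_bb(z) = τ⁻¹ ν_aa(z/τ), where any term whose argument lies outside S is zero. Then ν_ab(1/τ) = 0. More specifically, the relations force ν_bb(1/τ) = ν_ba(1/τ) = ν_aa(1/τ) = 0 and ν_ab(1/τ) = τ⁻¹ ν_ab(1/τ), hence ν_ab(1/τ) = 0. -/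
/-- Key computation in Proposition 3.4 for the Fibonacci chain: under the
exact renormalisation relations, the symmetry relation, and the support
condition (with `S ∩ [−τ², τ²] ⊆ {0, ±1, ±τ, ±(τ+1), ±1/τ}`), all four
pair correlation coefficients vanish at `z = 1/τ`; in particular
`ν_ab(1/τ) = τ⁻¹ ν_ab(1/τ)`, forcing `ν_ab(1/τ) = 0`.
Here `τ = (1+√5)/2`. -/
theorem fibonacci_correlations_vanish_at_inv_tau
    (τ : ℝ) (hτ : τ = (1 + Real.sqrt 5) / 2)
    (νaa νab νba νbb : ℝ → ℝ) (S : Set ℝ)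
    (hS : S ∩ Set.Icc (-τ ^ 2) (τ ^ 2) ⊆
      ({0, 1, -1, τ, -τ, τ + 1, -(τ + 1), 1 / τ, -(1 / τ)} : Set ℝ))
    (hsupp : ∀ z : ℝ, z ∉ S →
      νaa z = 0 ∧ νab z = 0 ∧ νba z = 0 ∧ νbb z = 0)
    (hsym : ∀ z : ℝ, νaa (-z) = νaa z ∧ νbb (-z) = νbb z ∧
      νab (-z) = νba z ∧ νba (-z) = νab z)
    (haa : ∀ z : ℝ, νaa z = τ⁻¹ * (νaa (z / τ) + νab (z / τ) +
      νba (z / τ) + νbb (z / τ)))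
    (hab : ∀ z : ℝ, νab z = τ⁻¹ * (νaa (z / τ - 1) + νba (z / τ - 1)))
    (hba : ∀ z : ℝ, νba z = τ⁻¹ * (νaa (z / τ + 1) + νab (z / τ + 1)))
    (hbb : ∀ z : ℝ, νbb z = τ⁻¹ * νaa (z / τ)) :
    νbb (1 / τ) = 0 ∧ νba (1 / τ) = 0 ∧ νaa (1 / τ) = 0 ∧
    νab (1 / τ) = τ⁻¹ * νab (1 / τ) ∧ νab (1 / τ) = 0 := by
  have hs2 : Real.sqrt 5 ^ 2 = 5 := Real.sq_sqrt (by norm_num)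
  have hs_lb : (2 : ℝ) < Real.sqrt 5 := by
    nlinarith [Real.sqrt_nonneg 5, hs2]
  have hs_ub : Real.sqrt 5 < 3 := by
    nlinarith [Real.sqrt_nonneg 5, hs2]
  set s := Real.sqrt 5 with hsdef
  have hτlb : (3:ℝ)/2 < τ := by rw [hτ]; linarith
  have hτub : τ < 2 := by rw [hτ]; linarith
  have hτpos : (0:ℝ) < τ := by linarith
  have hτne : τ ≠ 0 := ne_of_gt hτpos
  have hτsq : τ ^ 2 = τ + 1 := by rw [hτ]; nlinarith
  have hinv : 1 / τ = τ - 1 := by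
    field_simp; nlinarith
  -- 1/τ / τ = 2 - τ
  have harg1 : (1 / τ) / τ = 2 - τ := by
    rw [hinv]; field_simp; nlinarith
  -- 2 - τ ∉ S
  have hnS1 : (2 - τ) ∉ S := by
    intro hz
    have hIcc : (2 - τ) ∈ Set.Icc (-τ ^ 2) (τ ^ 2) := by
      constructor <;> nlinarith
    have := hS ⟨hz, hIcc⟩
    simp only [Set.mem_insert_iff, Set.mem_singleton_iff, hinv] at this
    rcases this with h|h|h|h|h|h|h|h|h <;> nlinarith
  -- 3 - τ ∉ S
  have hnS2 : (3 - τ) ∉ S := by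
    intro hz
    have hIcc : (3 - τ) ∈ Set.Icc (-τ ^ 2) (τ ^ 2) := by
      constructor <;> nlinarith
    have := hS ⟨hz, hIcc⟩
    simp only [Set.mem_insert_iff, Set.mem_singleton_iff, hinv] at this
    rcases this with h|h|h|h|h|h|h|h|h <;> nlinarith
  obtain ⟨z1aa, z1ab, z1ba, z1bb⟩ := hsupp _ hnS1
  obtain ⟨z2aa, z2ab, z2ba, z2bb⟩ := hsupp _ hnS2
  have hbb0 : νbb (1 / τ) = 0 := by
    rw [hbb, harg1, z1aa, mul_zero]
  have hba0 : νba (1 / τ) = 0 := by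
    have harg : (1 / τ) / τ + 1 = 3 - τ := by rw [harg1]; ring
    rw [hba, harg, z2aa, z2ab]; ring
  have haa0 : νaa (1 / τ) = 0 := by
    rw [haa, harg1, z1aa, z1ab, z1ba, z1bb]; ring
  have harg3 : (1 / τ) / τ - 1 = -(1 / τ) := by
    rw [harg1, hinv]; ring
  have hτinv : τ⁻¹ = τ - 1 := by rw [← one_div, hinv]
  have hfix : νab (1 / τ) = τ⁻¹ * νab (1 / τ) := by
    conv_lhs => rw [hab, harg3]
    obtain ⟨hA, _, _, hB⟩ := hsym (1 / τ)
    rw [hA, hB, haa0, zero_add]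
  have hab0 : νab (1 / τ) = 0 := by
    have h1 : (1 - τ⁻¹) * νab (1 / τ) = 0 := by
      rw [sub_mul, one_mul]; linarith [hfix]
    rcases mul_eq_zero.1 h1 with h | h
    · exfalso; rw [hτinv] at h; linarith
    · exact h
  exact ⟨hbb0, hba0, haa0, hfix, hab0⟩
end

section
/- Under the Fibonacci renormalisation relations (as in the previous context) with the symmetry ν_{αβ}(−z) = ν_{βα}(z) and support condition ν_{αβ}(z) = 0 for z ∉ Λ − Λ (where (Λ−Λ) ∩ [0, τ+1] = {0, 1, τ, τ+1} and 1/τ, 2 ∉ Λ−Λ), the values at small arguments are uniquely determined by ν_aa(0): ν_ab(0) = ν_ba(0) = 0, ν_aa(1) = ν_ab(1) = ν_bb(1) = 0, ν_ba(1) = τ⁻¹ ν_aa(0), ν_aa(τ) = τ⁻² ν_aa(0), ν_ab(τ) = τ⁻¹ ν_aa(0), ν_ba(τ) = ν_bb(τ) = 0. -/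
/-- Fibonacci renormalisation: with the symmetry and support conditions for
the support set `S = Λ − Λ` (where `S ∩ [0, τ+1] = {0, 1, τ, τ+1}` and
`1/τ, 2 ∉ S`, `S` symmetric), the pair correlation coefficients at small
arguments are uniquely determined by `ν_aa(0)`:
`ν_ab(0) = ν_ba(0) = 0`, `ν_aa(1) = ν_ab(1) = ν_bb(1) = 0`,
`ν_ba(1) = τ⁻¹ ν_aa(0)`, `ν_aa(τ) = τ⁻² ν_aa(0)`, `ν_ab(τ) = τ⁻¹ ν_aa(0)`,
`ν_ba(τ) = ν_bb(τ) = 0`. Here `τ = (1+√5)/2`. -/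
theorem fibonacci_small_correlation_values
    (τ : ℝ) (hτ : τ = (1 + Real.sqrt 5) / 2)
    (νaa νab νba νbb : ℝ → ℝ) (S : Set ℝ)
    (hS : S ∩ Set.Icc 0 (τ + 1) = ({0, 1, τ, τ + 1} : Set ℝ))
    (hSsym : ∀ z : ℝ, z ∈ S ↔ -z ∈ S)
    (h2S : (2 : ℝ) ∉ S)
    (hsupp : ∀ z : ℝ, z ∉ S →
      νaa z = 0 ∧ νab z = 0 ∧ νba z = 0 ∧ νbb z = 0)
    (hsym : ∀ z : ℝ, νaa (-z) = νaa z ∧ νbb (-z) = νbb z ∧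
      νab (-z) = νba z ∧ νba (-z) = νab z)
    (haa : ∀ z : ℝ, νaa z = τ⁻¹ * (νaa (z / τ) + νab (z / τ) +
      νba (z / τ) + νbb (z / τ)))
    (hab : ∀ z : ℝ, νab z = τ⁻¹ * (νaa (z / τ - 1) + νba (z / τ - 1)))
    (hba : ∀ z : ℝ, νba z = τ⁻¹ * (νaa (z / τ + 1) + νab (z / τ + 1)))
    (hbb : ∀ z : ℝ, νbb z = τ⁻¹ * νaa (z / τ)) :
    νab 0 = 0 ∧ νba 0 = 0 ∧
    νaa 1 = 0 ∧ νab 1 = 0 ∧ νbb 1 = 0 ∧ νba 1 = τ⁻¹ * νaa 0 ∧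
    νaa τ = τ⁻¹ ^ 2 * νaa 0 ∧ νab τ = τ⁻¹ * νaa 0 ∧
    νba τ = 0 ∧ νbb τ = 0 := by
  have hs5 : Real.sqrt 5 ^ 2 = 5 := Real.sq_sqrt (by norm_num)
  have hs5n : (0:ℝ) ≤ Real.sqrt 5 := Real.sqrt_nonneg 5
  have hτ1 : 1 < τ := by rw [hτ]; nlinarith
  have hτ2lt : τ < 2 := by rw [hτ]; nlinarith
  have hτ0 : τ ≠ 0 := by linarith
  have hsq : τ ^ 2 = τ + 1 := by rw [hτ]; nlinarith
  have hinv : 1 / τ = τ - 1 := by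
    field_simp; nlinarith
  -- τ - 1 ∉ S
  have hnot : ∀ x : ℝ, 0 ≤ x → x ≤ τ + 1 → x ≠ 0 → x ≠ 1 → x ≠ τ → x ≠ τ + 1 → x ∉ S := by
    intro x h0 h1 hx0 hx1 hxτ hxτ1 hxS
    have : x ∈ S ∩ Set.Icc 0 (τ + 1) := ⟨hxS, h0, h1⟩
    rw [hS] at this
    simp only [Set.mem_insert_iff, Set.mem_singleton_iff] at this
    tauto
  have hS1 : τ - 1 ∉ S :=
    hnot (τ - 1) (by linarith) (by linarith) (by intro h; linarith)
      (by intro h; linarith) (by intro h; linarith) (by intro h; linarith)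
  have hS2 : τ - 2 ∉ S := by
    intro h
    have : -(τ - 2) ∈ S := (hSsym _).mp h
    have h2τ : (2 - τ) ∈ S := by rwa [neg_sub] at this
    exact hnot (2 - τ) (by linarith) (by linarith) (by intro h; linarith)
      (by intro h; linarith) (by intro h; linarith) (by intro h; linarith) h2τ
  obtain ⟨z1, z2, z3, z4⟩ := hsupp _ hS1
  obtain ⟨w1, w2, w3, w4⟩ := hsupp _ hS2
  obtain ⟨t1, t2, t3, t4⟩ := hsupp _ h2S
  -- νaa 1 = 0
  have haa1 : νaa 1 = 0 := by
    have := haa 1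
    rw [hinv] at this
    rw [this, z1, z2, z3, z4]; ring
  have hbb1 : νbb 1 = 0 := by
    have := hbb 1
    rw [hinv] at this
    rw [this, z1]; ring
  have hab1 : νab 1 = 0 := by
    have := hab 1
    rw [hinv, show τ - 1 - 1 = τ - 2 by ring] at this
    rw [this, w1, w3]; ring
  have hab0 : νab 0 = 0 := by
    have := hab 0
    rw [show (0:ℝ) / τ - 1 = -1 by ring] at this
    rw [this, (hsym 1).1, (hsym 1).2.2.2, haa1, hab1]; ring
  have hba0 : νba 0 = 0 := by
    have := hba 0
    rw [show (0:ℝ) / τ + 1 = 1 by ring] at this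
    rw [this, haa1, hab1]; ring
  have hττ : τ / τ = 1 := div_self hτ0
  have hbbτ : νbb τ = 0 := by
    have := hbb τ
    rw [hττ] at this
    rw [this, haa1]; ring
  have habτ : νab τ = τ⁻¹ * νaa 0 := by
    have := hab τ
    rw [hττ, show (1:ℝ) - 1 = 0 by ring] at this
    rw [this, hba0]; ring
  have hbaτ : νba τ = 0 := by
    have := hba τ
    rw [hττ, show (1:ℝ) + 1 = 2 by ring] at this
    rw [this, t1, t2]; ring
  have hba1 : νba 1 = τ⁻¹ * (νaa τ + νab τ) := by
    have := hba 1
    rwa [hinv, show τ - 1 + 1 = τ by ring] at this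
  have haaτ : νaa τ = τ⁻¹ ^ 2 * νaa 0 := by
    have h := haa τ
    rw [hττ, haa1, hab1, hba1, habτ, hbb1] at h
    have hinv' : τ⁻¹ = τ - 1 := by rw [← hinv, one_div]
    have key : (τ - 1) * (νaa τ - (τ - 1) ^ 2 * νaa 0) = 0 := by
      rw [hinv'] at h
      linear_combination h + νaa τ * hsq
    have hc : τ - 1 ≠ 0 := by intro h; linarith
    have := (mul_eq_zero.mp key).resolve_left hc
    rw [hinv']
    linarith
  have hba1' : νba 1 = τ⁻¹ * νaa 0 := by
    rw [hba1, haaτ, habτ]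
    have hinv' : τ⁻¹ = τ - 1 := by rw [← hinv, one_div]
    rw [hinv']
    linear_combination νaa 0 * (τ - 1) * hsq
  exact ⟨hab0, hba0, haa1, hab1, hbb1, hba1', haaτ, habτ, hbaτ, hbbτ⟩
end
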